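/- The generating function for words on the alphabet {a,b,c}, weighted x per letter, that avoid both subwords acb and bc, when words are obtained by traversing a walk from vertex 1 to vertex 2 in the monoid network with arcs 1→1 labeled {b}, 1→2 labeled {a,c}, 2→1 labeled {b,c}, equals (2x − x² + x⁴)/(1 − x − 3x² + 2x³ − x⁵). -/

import Mathlib

inductive ABC : Type
  | a | b | c
  deriving DecidableEq

/-- Arcs of the monoid network: 1→1 labeled {b}, 1→2 labeled {a,c}, 2→1 labeled {b,c}
(vertices 1,2 encoded as 0,1 : Fin 2). -/
def arc : Fin 2 → Fin 2 → ABC → Prop := fun u v l =>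
  (u = 0 ∧ v = 0 ∧ l = ABC.b)
    ∨ (u = 0 ∧ v = 1 ∧ (l = ABC.a ∨ l = ABC.c))
    ∨ (u = 1 ∧ v = 0 ∧ (l = ABC.b ∨ l = ABC.c))

/-- `Reach u v w`: the word w is obtained by traversing a walk from u to v,
reading one assigned letter per arc. -/
inductive Reach : Fin 2 → Fin 2 → List ABC → Prop
  | nil (u : Fin 2) : Reach u u []
  | cons {u z v : Fin 2} {l : ABC} {w : List ABC} :
      arc u z l → Reach z v w → Reach u v (l :: w)

/-- Generating function for words from vertex 1 to vertex 2 of the network that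
avoid the consecutive subwords acb and bc, weighted x per letter. -/
noncomputable def Fnet : PowerSeries ℚ :=
  PowerSeries.mk fun n =>
    (Nat.card {w : List ABC // w.length = n ∧ Reach 0 1 w ∧
      ¬ [ABC.a, ABC.c, ABC.b] <:+: w ∧ ¬ [ABC.b, ABC.c] <:+: w} : ℚ)

/- ### Auxiliary development: a deterministic automaton -/

inductive St : Type | A | B | C | D | E | X deriving DecidableEq

def step : St → ABC → St
  | .A, .a => .E | .A, .b => .B | .A, .c => .D
  | .B, .a => .E | .B, .b => .B | .B, .c => .X
  | .C, .a => .E | .C, .b => .X | .C, .c => .D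
  | .D, .a => .X | .D, .b => .B | .D, .c => .A
  | .E, .a => .X | .E, .b => .B | .E, .c => .C
  | .X, _  => .X

def acc : St → Bool
  | .D => true | .E => true | _ => false

def accept : St → List ABC → Bool
  | s, [] => acc s
  | s, l :: w => accept (step s l) w

def avoidW (w : List ABC) : Prop :=
  ¬ [ABC.a, ABC.c, ABC.b] <:+: w ∧ ¬ [ABC.b, ABC.c] <:+: w

def spec : St → List ABC → Prop
  | .A, w => Reach 0 1 w ∧ avoidW w
  | .B, w => (Reach 0 1 w ∧ avoidW w) ∧ ¬ [ABC.c] <+: w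
  | .C, w => (Reach 0 1 w ∧ avoidW w) ∧ ¬ [ABC.b] <+: w
  | .D, w => Reach 1 1 w ∧ avoidW w
  | .E, w => (Reach 1 1 w ∧ avoidW w) ∧ ¬ [ABC.c, ABC.b] <+: w
  | .X, _ => False

lemma reach_cons_iff {u v : Fin 2} {l : ABC} {w : List ABC} :
    Reach u v (l :: w) ↔ ∃ z, arc u z l ∧ Reach z v w := by
  constructor
  · rintro (_ | ⟨h, hr⟩); exact ⟨_, h, hr⟩
  · rintro ⟨z, h, hr⟩; exact .cons h hr

lemma reach_nil_iff {u v : Fin 2} : Reach u v [] ↔ u = v := by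
  constructor
  · rintro (_ | _); rfl
  · rintro rfl; exact .nil u

@[simp] lemma reach0a {v w} : Reach 0 v (ABC.a :: w) ↔ Reach 1 v w := by
  simp [reach_cons_iff, Fin.exists_fin_two, arc]
@[simp] lemma reach0b {v w} : Reach 0 v (ABC.b :: w) ↔ Reach 0 v w := by
  simp [reach_cons_iff, Fin.exists_fin_two, arc]
@[simp] lemma reach0c {v w} : Reach 0 v (ABC.c :: w) ↔ Reach 1 v w := by
  simp [reach_cons_iff, Fin.exists_fin_two, arc]
@[simp] lemma reach1a {v w} : ¬ Reach 1 v (ABC.a :: w) := by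
  simp [reach_cons_iff, Fin.exists_fin_two, arc]
@[simp] lemma reach1b {v w} : Reach 1 v (ABC.b :: w) ↔ Reach 0 v w := by
  simp [reach_cons_iff, Fin.exists_fin_two, arc]
@[simp] lemma reach1c {v w} : Reach 1 v (ABC.c :: w) ↔ Reach 0 v w := by
  simp [reach_cons_iff, Fin.exists_fin_two, arc]

lemma accept_iff_spec : ∀ (w : List ABC) (s : St), accept s w = true ↔ spec s w := by
  intro w
  induction w with
  | nil =>
    intro s
    cases s <;> simp [accept, acc, spec, avoidW, reach_nil_iff]
  | cons l w ih =>
    intro s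
    have h : ∀ s', accept s' w = true ↔ spec s' w := ih
    cases s <;> cases l <;>
      simp_all [accept, step, spec, avoidW, List.infix_cons_iff, List.cons_prefix_cons] <;>
      tauto

/- ### Counting -/

instance : Fintype ABC := ⟨{ABC.a, ABC.b, ABC.c}, by intro x; cases x <;> simp⟩

def g : St → ℕ → ℕ
  | s, 0 => if acc s then 1 else 0
  | s, n + 1 => g (step s ABC.a) n + g (step s ABC.b) n + g (step s ABC.c) n

def words : ℕ → Finset (List ABC)
  | 0 => {[]}
  | n + 1 => ((words n).image (ABC.a :: ·)) ∪ ((words n).image (ABC.b :: ·))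
      ∪ ((words n).image (ABC.c :: ·))

lemma mem_words {n : ℕ} {w : List ABC} : w ∈ words n ↔ w.length = n := by
  induction n generalizing w with
  | zero => simp [words]
  | succ n ih =>
    cases w with
    | nil => simp [words]
    | cons l t =>
      cases l <;> simp [words, ih]

lemma card_filter_accept : ∀ (n : ℕ) (s : St),
    ((words n).filter (fun w => accept s w = true)).card = g s n := by
  intro n
  induction n with
  | zero => intro s; cases s <;> simp [words, g] <;> decide
  | succ n ih =>
    intro s
    have hinj : ∀ l : ABC, Function.Injective (l :: ·) := by
      intro l x y h; simpa using h
    have hfi : ∀ (l : ABC), ((words n).image (l :: ·)).filter (fun w => accept s w = true)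
        = ((words n).filter (fun w => accept (step s l) w = true)).image (l :: ·) := by
      intro l
      rw [Finset.filter_image]
      rfl
    have hdisj : ∀ (l l' : ABC) (s1 s2 : Finset (List ABC)), l ≠ l' →
        Disjoint (s1.image (l :: ·)) (s2.image (l' :: ·)) := by
      intro l l' s1 s2 hne
      simp only [Finset.disjoint_left, Finset.mem_image]
      rintro x ⟨u, _, rfl⟩ ⟨v, _, h⟩
      exact hne (List.cons.injEq .. ▸ h.symm).1
    rw [g, words, Finset.filter_union, Finset.filter_union, Finset.card_union_of_disjoint,
      Finset.card_union_of_disjoint, hfi, hfi, hfi,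
      Finset.card_image_of_injective _ (hinj _), Finset.card_image_of_injective _ (hinj _),
      Finset.card_image_of_injective _ (hinj _), ih, ih, ih]
    · exact Finset.disjoint_filter_filter (hdisj _ _ _ _ (by simp))
    · exact Finset.disjoint_union_left.2
        ⟨Finset.disjoint_filter_filter (hdisj _ _ _ _ (by simp)),
         Finset.disjoint_filter_filter (hdisj _ _ _ _ (by simp))⟩

lemma card_accept (n : ℕ) (s : St) :
    Nat.card {w : List ABC // w.length = n ∧ accept s w = true} = g s n := by
  rw [← card_filter_accept n s]
  have e : {w : List ABC // w.length = n ∧ accept s w = true}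
      ≃ {w : List ABC // w ∈ (words n).filter (fun w => accept s w = true)} :=
    Equiv.subtypeEquivRight (by intro w; simp [mem_words])
  rw [Nat.card_congr e, Nat.card_eq_fintype_card, Fintype.card_coe]

/- ### The generating function -/

lemma gX : ∀ n, g .X n = 0 := by
  intro n; induction n with
  | zero => rfl
  | succ n ih => simp [g, step, ih]

lemma grec (n : ℕ) : g .A (n+5) + 2 * g .A (n+2) = g .A (n+4) + 3 * g .A (n+3) + g .A n := by
  simp only [g, step, gX]
  omega

lemma Fnet_eq_mk : Fnet = PowerSeries.mk fun n => (g .A n : ℚ) := by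
  ext n
  rw [Fnet, PowerSeries.coeff_mk, PowerSeries.coeff_mk, ← card_accept n .A]
  congr 1
  exact Nat.card_congr (Equiv.subtypeEquivRight (by
    intro w
    rw [accept_iff_spec]
    simp [spec, avoidW, and_assoc]))

open PowerSeries in
lemma key : Fnet * (1 - X ^ 1 - C (R := ℚ) 3 * X ^ 2 + C (R := ℚ) 2 * X ^ 3 - X ^ 5)
    = C (R := ℚ) 2 * X ^ 1 - X ^ 2 + X ^ 4 := by
  rw [Fnet_eq_mk]
  set Fq := PowerSeries.mk fun n => (g .A n : ℚ) with hFq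
  have hexp : Fq * (1 - X ^ 1 - C (R := ℚ) 3 * X ^ 2 + C (R := ℚ) 2 * X ^ 3 - X ^ 5)
      = Fq - Fq * X ^ 1 - C (R := ℚ) 3 * (Fq * X ^ 2) + C (R := ℚ) 2 * (Fq * X ^ 3) - Fq * X ^ 5 := by
    ring
  rw [hexp]
  ext n
  simp only [map_sub, map_add, coeff_C_mul, coeff_mul_X_pow', coeff_mk, hFq, coeff_X_pow]
  rcases n with _|_|_|_|_|n
  · norm_num [g] <;> decide
  · norm_num [g, step, acc] <;> decide
  · norm_num [g, step, acc] <;> decide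
  · norm_num [g, step, acc] <;> decide
  · norm_num [g, step, acc] <;> decide
  · have h0 := grec n
    have h2 : (g St.A (n+5) : ℚ) + 2 * g St.A (n+2)
        = g St.A (n+4) + 3 * g St.A (n+3) + g St.A n := by exact_mod_cast h0
    simp only [show n+1+1+1+1+1 = n+5 by ring]
    norm_num [Nat.add_sub_cancel, show n+5-1 = n+4 by omega, show n+5-2 = n+3 by omega,
      show n+5-3 = n+2 by omega, show n+5-5 = n by omega, show ¬ n+5 = 1 by omega,
      show ¬ n+5 = 2 by omega, show ¬ n+5 = 4 by omega]
    push_cast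
    linarith [h2]

/-- That generating function equals (2x − x² + x⁴)/(1 − x − 3x² + 2x³ − x⁵). -/
theorem network_avoiding_gf :
    Fnet = (2 * PowerSeries.X - PowerSeries.X ^ 2 + PowerSeries.X ^ 4)
      * (1 - PowerSeries.X - 3 * PowerSeries.X ^ 2 + 2 * PowerSeries.X ^ 3
          - PowerSeries.X ^ 5)⁻¹ := by
  have h2 : (2 : PowerSeries ℚ) = PowerSeries.C (R := ℚ) 2 := (map_ofNat _ 2).symm
  have h3 : (3 : PowerSeries ℚ) = PowerSeries.C (R := ℚ) 3 := (map_ofNat _ 3).symm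
  have hD : (PowerSeries.constantCoeff (R := ℚ)) (1 - PowerSeries.X - 3 * PowerSeries.X ^ 2
      + 2 * PowerSeries.X ^ 3 - PowerSeries.X ^ 5) ≠ 0 := by
    simp [map_sub, map_add, map_mul, map_pow]
  rw [PowerSeries.eq_mul_inv_iff_mul_eq hD, h2, h3]
  linear_combination key
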